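/- Let R be a field, f(x) ∈ R[x] an irreducible separable polynomial, n ≥ 1, K := R[x]/(f(x)), and A := R[x]/(f(x)^n). Then A admits a K-algebra structure and A ≅ K[y]/(y^n) as K-algebras. -/

import Mathlib

set_option synthInstance.maxHeartbeats 1000000
set_option maxHeartbeats 1000000

open Polynomial AdjoinRoot

theorem main (R : Type) [Field R] (f : Polynomial R) (hf : Irreducible f)
    (hsep : f.Separable) (n : ℕ) (hn : 1 ≤ n) :
    ∃ alg : Algebra (AdjoinRoot f) (AdjoinRoot (f ^ n)),
      Nonempty (@AlgEquiv (AdjoinRoot f) (AdjoinRoot (f ^ n))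
        (AdjoinRoot ((X : Polynomial (AdjoinRoot f)) ^ n)) _ _ _ alg _) := by
  classical
  have hf0 : f ≠ 0 := hf.ne_zero
  haveI : Nontrivial (AdjoinRoot f) :=
    Ideal.Quotient.nontrivial_iff.mpr (Ideal.span_singleton_ne_top hf.not_isUnit)
  haveI hpr : (Ideal.span {f} : Ideal (Polynomial R)).IsPrime :=
    (PrincipalIdealRing.isMaximal_of_irreducible hf).isPrime
  haveI : IsDomain (AdjoinRoot f) := Ideal.Quotient.isDomain _
  set q : Polynomial (AdjoinRoot f) := X + C (root f) with hq
  set fK : Polynomial (AdjoinRoot f) := f.map (algebraMap R (AdjoinRoot f)) with hfK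
  set g : Polynomial (AdjoinRoot f) := fK.comp q with hgdef
  set mkB := AdjoinRoot.mk ((X : Polynomial (AdjoinRoot f)) ^ n) with hmkB
  set b : AdjoinRoot ((X : Polynomial (AdjoinRoot f)) ^ n) := mkB q with hb
  -- root facts
  have hroot : (Polynomial.aeval (root f)) f = 0 := by
    rw [AdjoinRoot.aeval_eq, AdjoinRoot.mk_self]
  have hder : IsUnit ((Polynomial.aeval (root f)) (derivative f)) := by
    obtain ⟨a, c, hac⟩ := hsep
    have h := congrArg (Polynomial.aeval (root f)) hac
    simp only [map_add, map_mul, hroot, mul_zero, zero_add, map_one] at h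
    exact IsUnit.of_mul_eq_one _ (by rwa [mul_comm] at h)
  -- coefficients of g
  have hg0 : g.coeff 0 = 0 := by
    rw [hgdef, coeff_zero_eq_eval_zero, eval_comp, hq]
    simp [hfK, eval_map, ← aeval_def, hroot]
  have hg1 : IsUnit (g.coeff 1) := by
    have h1 : (derivative g).coeff 0 = g.coeff 1 := by
      rw [coeff_derivative]; simp
    have h2 : (derivative g).coeff 0 = (Polynomial.aeval (root f)) (derivative f) := by
      rw [hgdef, derivative_comp, coeff_zero_eq_eval_zero]
      simp [hq, hfK, derivative_map, eval_map, ← AdjoinRoot.algebraMap_eq, ← aeval_def]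
    rw [← h1, h2]; exact hder
  have hgfact : g = X * g.divX := by
    conv_lhs => rw [← Polynomial.X_mul_divX_add g]
    rw [hg0, map_zero, add_zero]
  -- the evaluation map
  have hgq : g = (Polynomial.aeval q) f := by
    rw [hgdef, hfK, Polynomial.comp_eq_aeval, Polynomial.aeval_map_algebraMap]
  have hψf : (Polynomial.aeval b) f = mkB g := by
    have hmk : b = (Ideal.Quotient.mkₐ R _ :
        Polynomial (AdjoinRoot f) →ₐ[R] AdjoinRoot ((X : Polynomial (AdjoinRoot f)) ^ n)) q := rfl
    rw [hmk]
    exact (Polynomial.aeval_algHom_apply (Ideal.Quotient.mkₐ R _) q f).trans (by rw [← hgq]; rfl)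
  -- nilpotency and units in B
  have hXn : (mkB X) ^ n = 0 := by
    rw [hmkB, ← map_pow, AdjoinRoot.mk_self]
  have hu : IsUnit (mkB g.divX) := by
    have h2 : mkB g.divX = mkB (C (g.coeff 1)) + mkB X * mkB g.divX.divX := by
      conv_lhs => rw [← Polynomial.X_mul_divX_add g.divX]
      rw [map_add, map_mul, Polynomial.coeff_divX, add_comm]
    rw [h2]
    have hnil : IsNilpotent (mkB X * mkB g.divX.divX) :=
      ⟨n, by rw [mul_pow, hXn, zero_mul]⟩
    have hunit : IsUnit (mkB (C (g.coeff 1))) := (hg1.map C).map mkB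
    exact hnil.isUnit_add_left_of_commute hunit (Commute.all _ _)
  have hψfn : (Polynomial.aeval b) (f ^ n) = 0 := by
    rw [map_pow, hψf, hgfact, map_mul, mul_pow, hXn, zero_mul]
  have hψfn1 : (Polynomial.aeval b) (f ^ (n - 1)) ≠ 0 := by
    rw [map_pow, hψf, hgfact, map_mul, mul_pow]
    have hX1 : (mkB X) ^ (n - 1) ≠ 0 := by
      rw [hmkB, ← map_pow]
      refine AdjoinRoot.mk_ne_zero_of_natDegree_lt (monic_X_pow n) (pow_ne_zero _ X_ne_zero) ?_
      rw [natDegree_X_pow, natDegree_X_pow]; omega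
    intro h0
    exact hX1 (((hu.pow (n - 1)).mul_right_eq_zero).mp (by rwa [mul_comm] at h0))
  -- kernel computation
  have hprime : Prime f := hf.prime
  set ψ₀ : Polynomial R →ₐ[R] AdjoinRoot ((X : Polynomial (AdjoinRoot f)) ^ n) :=
    Polynomial.aeval b with hψ₀
  set I : Ideal (Polynomial R) := RingHom.ker ψ₀.toRingHom with hIdef
  have hle : Ideal.span {f ^ n} ≤ I := by
    rw [Ideal.span_le, Set.singleton_subset_iff]
    exact hψfn
  have hker : I = Ideal.span {f ^ n} := by
    obtain ⟨g₀, hI⟩ := (IsPrincipalIdealRing.principal I).principal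
    rw [Ideal.submodule_span_eq] at hI
    have hdvd : g₀ ∣ f ^ n := by
      rw [← Ideal.mem_span_singleton, ← hI]
      exact hle (Ideal.subset_span rfl)
    obtain ⟨i, hin, hassoc⟩ := (dvd_prime_pow hprime n).mp hdvd
    rcases eq_or_lt_of_le hin with hin' | hin'
    · rw [hI]
      exact Ideal.span_singleton_eq_span_singleton.mpr (hin' ▸ hassoc)
    · exfalso
      apply hψfn1
      have hmem : f ^ (n - 1) ∈ I := by
        rw [hI, Ideal.mem_span_singleton]
        exact hassoc.dvd.trans (pow_dvd_pow f (by omega))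
      exact hmem
  -- the induced map on the quotient
  set ψ : AdjoinRoot (f ^ n) →ₐ[R] AdjoinRoot ((X : Polynomial (AdjoinRoot f)) ^ n) :=
    AdjoinRoot.liftAlgHom (f ^ n) (Algebra.ofId R _) b hψfn with hψdef
  have hψmk : ∀ p : Polynomial R, ψ (AdjoinRoot.mk (f ^ n) p) = ψ₀ p := fun p =>
    AdjoinRoot.liftAlgHom_mk (h := hψfn) ..
  have hinj : Function.Injective ψ := by
    rw [injective_iff_map_eq_zero]
    intro a ha
    induction a using AdjoinRoot.induction_on with
    | ih p =>
      rw [hψmk] at ha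
      have hmem : p ∈ I := ha
      rw [hker, Ideal.mem_span_singleton] at hmem
      exact AdjoinRoot.mk_eq_zero.mpr hmem
  -- dimensions
  have pbA := AdjoinRoot.powerBasis (pow_ne_zero n hf0)
  have pbK := AdjoinRoot.powerBasis hf0
  have pbB := AdjoinRoot.powerBasis' (monic_X_pow (R := AdjoinRoot f) n)
  haveI : Module.Finite R (AdjoinRoot (f ^ n)) := Module.Finite.of_basis pbA.basis
  haveI : Module.Finite R (AdjoinRoot f) := Module.Finite.of_basis pbK.basis
  haveI : Module.Free R (AdjoinRoot f) := Module.Free.of_basis pbK.basis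
  haveI : Module.Finite (AdjoinRoot f) (AdjoinRoot ((X : Polynomial (AdjoinRoot f)) ^ n)) :=
    Module.Finite.of_basis pbB.basis
  haveI : Module.Free (AdjoinRoot f) (AdjoinRoot ((X : Polynomial (AdjoinRoot f)) ^ n)) :=
    Module.Free.of_basis pbB.basis
  haveI : Module.Finite R (AdjoinRoot ((X : Polynomial (AdjoinRoot f)) ^ n)) :=
    Module.Finite.trans (AdjoinRoot f) _
  have hdim : Module.finrank R (AdjoinRoot (f ^ n)) =
      Module.finrank R (AdjoinRoot ((X : Polynomial (AdjoinRoot f)) ^ n)) := by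
    rw [(AdjoinRoot.powerBasis (pow_ne_zero n hf0)).finrank,
      ← Module.finrank_mul_finrank R (AdjoinRoot f)
        (AdjoinRoot ((X : Polynomial (AdjoinRoot f)) ^ n)),
      (AdjoinRoot.powerBasis hf0).finrank,
      (AdjoinRoot.powerBasis' (monic_X_pow (R := AdjoinRoot f) n)).finrank]
    simp only [AdjoinRoot.powerBasis_dim, AdjoinRoot.powerBasis'_dim, natDegree_pow,
      natDegree_X_pow, natDegree_X]
    ring
  have hsurj : Function.Surjective ψ :=
    (LinearMap.injective_iff_surjective_of_finrank_eq_finrank hdim).mp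
      (show Function.Injective ψ.toLinearMap from hinj)
  set e := AlgEquiv.ofBijective ψ ⟨hinj, hsurj⟩ with he
  letI alg : Algebra (AdjoinRoot f) (AdjoinRoot (f ^ n)) :=
    ((e.symm : _ →ₐ[R] _).toRingHom.comp
      (algebraMap (AdjoinRoot f) (AdjoinRoot ((X : Polynomial (AdjoinRoot f)) ^ n)))).toAlgebra
  refine ⟨alg, ⟨{ e.toRingEquiv with commutes' := fun k => ?_ }⟩⟩
  show e (e.symm (algebraMap _ _ k)) = _
  exact e.apply_symm_apply _

/-- For `f` irreducible and separable, `K := R[x]/(f)`, `A := R[x]/(f^n)`: the algebra `A`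
admits a `K`-algebra structure, and with it `A ≅ K[y]/(y^n)` as `K`-algebras. -/
theorem stmt12 (R : Type) [Field R] (f : Polynomial R) (hf : Irreducible f)
    (hsep : f.Separable) (n : ℕ) (hn : 1 ≤ n) :
    ∃ alg : Algebra (Polynomial R ⧸ Ideal.span {f}) (Polynomial R ⧸ Ideal.span {f ^ n}),
      Nonempty (@AlgEquiv (Polynomial R ⧸ Ideal.span {f}) (Polynomial R ⧸ Ideal.span {f ^ n})
        (Polynomial (Polynomial R ⧸ Ideal.span {f}) ⧸
          Ideal.span {(Polynomial.X : Polynomial (Polynomial R ⧸ Ideal.span {f})) ^ n})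
        _ _ (by refine (@Ideal.Quotient.ring _ _ _ ?_).toSemiring
                exact @Ideal.instIsTwoSided _ Polynomial.commSemiring _)
        alg (by refine @Ideal.Quotient.algebra _ _ _ _ _ _ ?_)) := by
  
  exact main R f hf hsep n hn
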